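/- Let d ≥ 1, β > 0, let Φ : [0,∞) × ℝ^d → ℝ satisfy condition (C), and let (Φ_γ)_{γ} be a family of functions Φ_γ : [0,∞) × ℝ^d → ℝ, indexed by γ ranging over a sequence converging to 0, such that: each Φ_γ(t,·) is β-strongly convex and lower semicontinuous; for each u ∈ ℝ^d and each T > 0, sup_{0 ≤ t ≤ T} |Φ_γ(t,u)| < ∞; and for each u ∈ ℝ^d and each T > 0, sup_{0 ≤ t ≤ T} |Φ_γ(t,u) − Φ(t,u)| → 0 as γ → 0. Let m_γ(t,v) denote the unique minimizer of w ↦ Φ_γ(t,w) − ⟨w,v⟩. Then for every C > 0 and T > 0 there is a constant C′ > 0 (depending on T, C, β) such that sup_γ sup_{0 ≤ t ≤ T} sup_{‖v‖₂ ≤ C} ‖m_γ(t,v)‖₂ ≤ C′. -/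

import Mathlib

open RealInnerProductSpace Filter

/-- A function `f : ℝ^d → ℝ` is `β`-strongly convex. -/
def IsStronglyConvex {d : ℕ} (β : ℝ) (f : EuclideanSpace ℝ (Fin d) → ℝ) : Prop :=
  ∀ x y : EuclideanSpace ℝ (Fin d), ∀ α : ℝ, 0 ≤ α → α ≤ 1 →
    f (α • x + (1 - α) • y) ≤ α * f x + (1 - α) * f y - β * (α * (1 - α)) / 2 * ‖x - y‖ ^ 2

/-- `g` is a subgradient of `f` at `w`. -/
def IsSubgradientAt {d : ℕ} (f : EuclideanSpace ℝ (Fin d) → ℝ)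
    (w g : EuclideanSpace ℝ (Fin d)) : Prop :=
  ∀ u, f u ≥ f w + ⟪g, u - w⟫

lemma l1_le_sqrt_mul_l2 {d : ℕ} (x : EuclideanSpace ℝ (Fin d)) :
    ∑ i, |x i| ≤ Real.sqrt d * ‖x‖ := by
  have h := Real.sum_mul_le_sqrt_mul_sqrt Finset.univ (fun i => |x i|) (fun _ => (1:ℝ))
  simp only [mul_one, one_pow, sq_abs] at h
  rw [EuclideanSpace.norm_eq]
  simp only [Real.norm_eq_abs, sq_abs]
  calc ∑ i, |x i| ≤ Real.sqrt (∑ i, x i ^ 2) * Real.sqrt (∑ _i : Fin d, (1:ℝ)) := h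
    _ = Real.sqrt d * Real.sqrt (∑ i, x i ^ 2) := by rw [mul_comm]; congr 1; simp

lemma convexOn_of_sc {d : ℕ} {β : ℝ} (hβ : 0 < β) {f : EuclideanSpace ℝ (Fin d) → ℝ}
    (hf : IsStronglyConvex β f) : ConvexOn ℝ Set.univ f := by
  refine ⟨convex_univ, fun x _ y _ a b ha hb hab => ?_⟩
  have hb' : b = 1 - a := by linarith
  subst hb'
  have h := hf x y a ha (by linarith)
  have hQ : 0 ≤ β * (a * (1 - a)) / 2 * ‖x - y‖ ^ 2 :=
    mul_nonneg (div_nonneg (mul_nonneg hβ.le (mul_nonneg ha hb)) two_pos.le) (sq_nonneg _)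
  simp only [smul_eq_mul]
  linarith

lemma repr_sum {d : ℕ} (h : EuclideanSpace ℝ (Fin d)) :
    ∑ i, (h i) • EuclideanSpace.single i (1:ℝ) = h := by
  apply PiLp.ext
  intro j
  have : (∑ i, (h i) • EuclideanSpace.single i (1:ℝ)) j
      = ∑ i, ((h i) • EuclideanSpace.single i (1:ℝ)) j := by
    rw [WithLp.ofLp_sum]; exact Finset.sum_apply j Finset.univ _
  rw [this]
  simp [EuclideanSpace.single_apply]

set_option maxHeartbeats 1600000 in
/-- uniform boundedness of minimizers: if `Φ` satisfies condition (C)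
and `(Φ_γ)` is a family (indexed along a sequence `γ → 0`) of `β`-strongly convex,
l.s.c. functions, locally bounded in `t` for each `u`, converging to `Φ` uniformly
on compact time intervals pointwise in `u`, then the minimizers `m_γ(t,v)` of
`w ↦ Φ_γ(t,w) − ⟨w,v⟩` are bounded uniformly over `γ`, `t ∈ [0,T]` and `‖v‖₂ ≤ C`. -/
theorem stmt16 {d : ℕ} (hd : 1 ≤ d) {β : ℝ} (hβ : 0 < β)
    (Φ : ℝ → EuclideanSpace ℝ (Fin d) → ℝ)
    (hC1 : ∀ t : ℝ, 0 ≤ t → IsStronglyConvex β (Φ t) ∧ LowerSemicontinuous (Φ t))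
    (hC2 : ∀ u : EuclideanSpace ℝ (Fin d), ContinuousOn (fun t => Φ t u) (Set.Ici 0))
    (hC3 : ∃ u₀ : EuclideanSpace ℝ (Fin d), ∀ T : ℝ, 0 < T → ∃ cT : ℝ, 0 < cT ∧
      ∀ t ∈ Set.Icc (0 : ℝ) T, ∀ g : EuclideanSpace ℝ (Fin d),
        IsSubgradientAt (Φ t) u₀ g → ‖g‖ ≤ cT)
    (γseq : ℕ → ℝ) (hγpos : ∀ n, 0 < γseq n) (hγ0 : Tendsto γseq atTop (nhds 0))
    (Φγ : ℕ → ℝ → EuclideanSpace ℝ (Fin d) → ℝ)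
    (hsc : ∀ n, ∀ t : ℝ, 0 ≤ t → IsStronglyConvex β (Φγ n t) ∧ LowerSemicontinuous (Φγ n t))
    (hbdd : ∀ n, ∀ u : EuclideanSpace ℝ (Fin d), ∀ T : ℝ, 0 < T →
      ∃ B : ℝ, ∀ t ∈ Set.Icc (0 : ℝ) T, |Φγ n t u| ≤ B)
    (hconv : ∀ u : EuclideanSpace ℝ (Fin d), ∀ T : ℝ, 0 < T → ∀ ε : ℝ, 0 < ε →
      ∃ N : ℕ, ∀ n ≥ N, ∀ t ∈ Set.Icc (0 : ℝ) T, |Φγ n t u - Φ t u| ≤ ε)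
    (m : ℕ → ℝ → EuclideanSpace ℝ (Fin d) → EuclideanSpace ℝ (Fin d))
    (hm : ∀ n, ∀ t : ℝ, 0 ≤ t → ∀ v u : EuclideanSpace ℝ (Fin d),
      Φγ n t (m n t v) - ⟪m n t v, v⟫ ≤ Φγ n t u - ⟪u, v⟫) :
    ∀ C : ℝ, 0 < C → ∀ T : ℝ, 0 < T → ∃ C' : ℝ, 0 < C' ∧
      ∀ n, ∀ t ∈ Set.Icc (0 : ℝ) T, ∀ v : EuclideanSpace ℝ (Fin d),
        ‖v‖ ≤ C → ‖m n t v‖ ≤ C' := by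
  intro C hC T hT
  classical
  -- Step A : uniform (in n and t) bound at each fixed point
  have stepA : ∀ u : EuclideanSpace ℝ (Fin d), ∃ M : ℝ, 0 ≤ M ∧
      ∀ n, ∀ t ∈ Set.Icc (0:ℝ) T, |Φγ n t u| ≤ M := by
    intro u
    obtain ⟨K, hK⟩ := (isCompact_Icc (a := (0:ℝ)) (b := T)).exists_bound_of_continuousOn
      ((hC2 u).mono Set.Icc_subset_Ici_self)
    obtain ⟨N, hN⟩ := hconv u T hT 1 one_pos
    choose B hB using fun n => hbdd n u T hT
    set M₀ : ℝ := (Finset.range (N+1)).sup' (by simp) (fun n => max (K+1) (B n)) with hM₀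
    have hKB : K + 1 ≤ M₀ :=
      le_trans (le_max_left _ _)
        (Finset.le_sup' (fun n => max (K+1) (B n)) (by simp : 0 ∈ Finset.range (N+1)))
    refine ⟨max 0 M₀, le_max_left _ _, ?_⟩
    intro n t ht
    rcases le_or_gt N n with h | h
    · have h1 := hN n h t ht
      have h2 := hK t ht
      rw [Real.norm_eq_abs] at h2
      have h3 : |Φγ n t u| ≤ K + 1 := by
        have := abs_sub_abs_le_abs_sub (Φγ n t u) (Φ t u)
        linarith
      exact h3.trans (hKB.trans (le_max_right _ _))
    · have hBn : B n ≤ M₀ :=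
        le_trans (le_max_right _ _) (Finset.le_sup' (fun n => max (K+1) (B n)) (Finset.mem_range.mpr (by omega)))
      exact (hB n t ht).trans (hBn.trans (le_max_right _ _))
  choose M hM0 hM using stepA
  set e : Fin d → EuclideanSpace ℝ (Fin d) := fun i => EuclideanSpace.single i (1:ℝ) with he
  have : Nonempty (Fin d) := ⟨⟨0, hd⟩⟩
  set Mm : ℝ := max (M 0) (Finset.univ.sup' Finset.univ_nonempty
    (fun i : Fin d => max (M (e i)) (M (-e i)))) with hMm
  have hMm0 : 0 ≤ Mm := le_trans (hM0 0) (le_max_left _ _)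
  have hMmu0 : M 0 ≤ Mm := le_max_left _ _
  have hMme : ∀ i, M (e i) ≤ Mm := fun i =>
    le_trans (le_trans (le_max_left _ _)
      (Finset.le_sup' (fun i : Fin d => max (M (e i)) (M (-e i))) (Finset.mem_univ i)))
      (le_max_right _ _)
  have hMme' : ∀ i, M (-e i) ≤ Mm := fun i =>
    le_trans (le_trans (le_max_right _ _)
      (Finset.le_sup' (fun i : Fin d => max (M (e i)) (M (-e i))) (Finset.mem_univ i)))
      (le_max_right _ _)
  -- Step C : bound on the ℓ¹ unit ball
  have stepC : ∀ n, ∀ t ∈ Set.Icc (0:ℝ) T, ∀ h : EuclideanSpace ℝ (Fin d),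
      (∑ i, |h i|) ≤ 1 → Φγ n t h ≤ Mm := by
    intro n t ht h hh
    have hconvf : ConvexOn ℝ Set.univ (Φγ n t) := convexOn_of_sc hβ (hsc n t ht.1).1
    set w : Option (Fin d) → ℝ := fun o => o.elim (1 - ∑ i, |h i|) (fun i => |h i|) with hw
    set z : Option (Fin d) → EuclideanSpace ℝ (Fin d) :=
      fun o => o.elim 0 (fun i => Real.sign (h i) • e i) with hz
    have hw0 : ∀ o ∈ (Finset.univ : Finset (Option (Fin d))), 0 ≤ w o := by
      rintro (_ | i) _
      · simp only [hw, Option.elim]; linarith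
      · exact abs_nonneg _
    have hw1 : ∑ o, w o = 1 := by
      rw [Fintype.sum_option]
      simp only [hw, Option.elim]
      ring
    have hsum : ∑ o, w o • z o = h := by
      rw [Fintype.sum_option]
      simp only [hw, hz, Option.elim]
      rw [smul_zero, zero_add]
      have hterm : ∀ i : Fin d, |h i| • (Real.sign (h i) • e i) = (h i) • e i := by
        intro i
        rw [smul_smul]
        congr 1
        rcases lt_trichotomy (h i) 0 with hc | hc | hc
        · rw [Real.sign_of_neg hc, abs_of_neg hc]; ring
        · rw [hc]; simp
        · rw [Real.sign_of_pos hc, abs_of_pos hc]; ring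
      rw [Finset.sum_congr rfl (fun i _ => hterm i)]
      exact repr_sum h
    have hzb : ∀ o ∈ (Finset.univ : Finset (Option (Fin d))), Φγ n t (z o) ≤ Mm := by
      rintro (_ | i) _
      · simp only [hz, Option.elim]
        exact le_trans (le_trans (le_abs_self _) (hM 0 n t ht)) hMmu0
      · simp only [hz, Option.elim]
        rcases lt_trichotomy (h i) 0 with hc | hc | hc
        · rw [Real.sign_of_neg hc, neg_smul, one_smul]
          exact le_trans (le_trans (le_abs_self _) (hM (-e i) n t ht)) (hMme' i)
        · rw [hc, Real.sign_zero, zero_smul]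
          exact le_trans (le_trans (le_abs_self _) (hM 0 n t ht)) hMmu0
        · rw [Real.sign_of_pos hc, one_smul]
          exact le_trans (le_trans (le_abs_self _) (hM (e i) n t ht)) (hMme i)
    have hmem : ∀ o ∈ (Finset.univ : Finset (Option (Fin d))), z o ∈ Set.univ :=
      fun _ _ => Set.mem_univ _
    have hj := hconvf.map_sum_le hw0 hw1 hmem
    rw [hsum] at hj
    refine le_trans hj ?_
    calc ∑ o, w o * Φγ n t (z o) ≤ ∑ o, w o * Mm :=
          Finset.sum_le_sum (fun o ho => mul_le_mul_of_nonneg_left (hzb o ho) (hw0 o ho))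
      _ = Mm := by rw [← Finset.sum_mul, hw1, one_mul]
  -- Step D
  set sd : ℝ := Real.sqrt d with hsd
  have hsd1 : (1:ℝ) ≤ sd := by
    rw [hsd, show (1:ℝ) = Real.sqrt 1 from Real.sqrt_one.symm]
    exact Real.sqrt_le_sqrt (by exact_mod_cast hd)
  have hsd0 : (0:ℝ) < sd := lt_of_lt_of_le one_pos hsd1
  set K : ℝ := (4/β) * (3*Mm + 2*Mm*sd + C) with hKdef
  have hA : (0:ℝ) < 3*Mm + 2*Mm*sd + C := by nlinarith [mul_nonneg hMm0 hsd0.le]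
  have hKpos : 0 < K := mul_pos (by positivity) hA
  refine ⟨max 1 K, lt_of_lt_of_le one_pos (le_max_left _ _), ?_⟩
  intro n t ht v hv
  set x := m n t v with hxdef
  set r : ℝ := ‖x‖ with hrdef
  rcases le_or_gt r 1 with hr1 | hr1
  · exact le_trans hr1 (le_max_left _ _)
  have hr0 : (0:ℝ) < r := lt_trans one_pos hr1
  refine le_trans ?_ (le_max_right 1 K)
  -- key1 : strong convexity + minimality at the midpoint of 0 and x
  have hsc' := (hsc n t ht.1).1 0 x (1/2) (by norm_num) (by norm_num)
  have hnx : ‖(0 : EuclideanSpace ℝ (Fin d)) - x‖ = r := by rw [zero_sub, norm_neg]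
  rw [hnx] at hsc'
  have hmin := hm n t ht.1 v ((1/2 : ℝ) • (0 : EuclideanSpace ℝ (Fin d)) + (1 - 1/2 : ℝ) • x)
  have hip : ⟪(1/2 : ℝ) • (0 : EuclideanSpace ℝ (Fin d)) + (1 - 1/2 : ℝ) • x, v⟫
      = (1/2 : ℝ) * ⟪x, v⟫ := by
    rw [inner_add_left, real_inner_smul_left, real_inner_smul_left, inner_zero_left]
    norm_num
  rw [hip] at hmin
  have hiv : ⟪x, v⟫ ≤ r * C := by
    calc ⟪x, v⟫ ≤ |⟪x, v⟫| := le_abs_self _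
      _ ≤ ‖x‖ * ‖v‖ := abs_real_inner_le_norm _ _
      _ ≤ r * C := mul_le_mul_of_nonneg_left hv hr0.le
  have key1 : β/4 * r^2 ≤ Φγ n t 0 - Φγ n t x + C * r := by nlinarith [hsc', hmin, hiv]
  -- lower bound on Φγ n t x via convex extrapolation
  have hden : (0:ℝ) < sd*r+1 := by nlinarith [mul_pos hsd0 hr0]
  have hsr : (0:ℝ) < sd*r := mul_pos hsd0 hr0
  set lam : ℝ := (sd*r+1)⁻¹ with hlam
  have hlam0 : 0 < lam := by rw [hlam]; exact inv_pos.mpr hden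
  have hlam1 : lam ≤ 1 := by
    rw [hlam]
    have h1 : (1:ℝ) ≤ sd*r+1 := by linarith [hsr]
    calc (sd*r+1)⁻¹ ≤ 1⁻¹ := inv_anti₀ one_pos h1
      _ = 1 := inv_one
  have h1l : (0:ℝ) ≤ 1 - lam := by linarith
  set p : EuclideanSpace ℝ (Fin d) := (-(sd*r)⁻¹) • x with hp
  have hpl1 : ∑ i, |p i| ≤ 1 := by
    have hl1 : ∑ i, |x i| ≤ sd * r := by
      rw [hsd, hrdef]; exact l1_le_sqrt_mul_l2 x
    have hpe : ∀ i, |p i| = (sd*r)⁻¹ * |x i| := by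
      intro i
      rw [hp, PiLp.smul_apply, smul_eq_mul, abs_mul, abs_neg, abs_inv, abs_of_pos hsr]
    rw [Finset.sum_congr rfl (fun i _ => hpe i), ← Finset.mul_sum]
    calc (sd*r)⁻¹ * ∑ i, |x i| ≤ (sd*r)⁻¹ * (sd*r) :=
          mul_le_mul_of_nonneg_left hl1 (inv_nonneg.mpr hsr.le)
      _ = 1 := inv_mul_cancel₀ (ne_of_gt hsr)
  have hfp : Φγ n t p ≤ Mm := stepC n t ht p hpl1
  have hcomb : lam • x + (1 - lam) • p = (0 : EuclideanSpace ℝ (Fin d)) := by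
    rw [hp, smul_smul, ← add_smul]
    have hz : lam + (1 - lam) * (-(sd*r)⁻¹) = 0 := by
      rw [hlam]
      field_simp
      ring
    rw [hz, zero_smul]
  have hcx := (hsc n t ht.1).1 x p lam hlam0.le hlam1
  rw [hcomb] at hcx
  have hQ2 : 0 ≤ β * (lam * (1 - lam)) / 2 * ‖x - p‖ ^ 2 :=
    mul_nonneg (div_nonneg (mul_nonneg hβ.le (mul_nonneg hlam0.le h1l)) two_pos.le) (sq_nonneg _)
  have hf0l : -Mm ≤ Φγ n t 0 := by
    have h1 := hM 0 n t ht
    have h2 := neg_abs_le (Φγ n t 0)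
    linarith [hMmu0]
  have hf0u : Φγ n t 0 ≤ Mm := le_trans (le_trans (le_abs_self _) (hM 0 n t ht)) hMmu0
  have hplm : (1-lam) * Φγ n t p ≤ (1-lam) * Mm := mul_le_mul_of_nonneg_left hfp h1l
  have hlmm : lam * Mm ≤ 1 * Mm := mul_le_mul_of_nonneg_right hlam1 hMm0
  have hlx : -(2*Mm) ≤ lam * Φγ n t x := by linarith [hcx, hQ2, hf0l, hplm, hlmm, mul_nonneg hlam0.le hMm0]
  have hfx : -(2*Mm) * (sd*r+1) ≤ Φγ n t x := by
    have h2 := mul_le_mul_of_nonneg_left hlx hden.le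
    have h3 : (sd*r+1) * (lam * Φγ n t x) = Φγ n t x := by
      rw [← mul_assoc, hlam, mul_inv_cancel₀ (ne_of_gt hden), one_mul]
    rw [h3] at h2
    linarith [h2]
  -- conclude
  have final : β/4 * r^2 ≤ 3*Mm + (2*Mm*sd + C) * r := by nlinarith [key1, hfx, hf0u]
  by_contra hcon
  push_neg at hcon
  have hβK : β * K = 4*(3*Mm + 2*Mm*sd + C) := by
    rw [hKdef]
    field_simp
  have h5 : β * K * r < β * r * r :=
    mul_lt_mul_of_pos_right (mul_lt_mul_of_pos_left hcon hβ) hr0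
  nlinarith [h5, hβK, final, mul_nonneg hMm0 (by linarith : (0:ℝ) ≤ r - 1)]
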